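/- For each u ∈ BD^p(X) let I_u ⊂ ℝ be a closed bounded interval containing the image of u, and let Y = ∏_{u ∈ BD^p(X)} I_u with the product topology. Then the evaluation map e : X → Y, e(x)(u) = u(x), is a topological embedding; the closure X̄ of e(X) in Y is a compact Hausdorff space in which e(X) is open and dense, and every u ∈ BD^p(X) extends to a continuous function on X̄. -/

import Mathlib

open MeasureTheory Metric Set Filter Topology ENNReal NNReal

noncomputable section

variable {X : Type*} [MetricSpace X] [MeasurableSpace X] [BorelSpace X]

/-- A rectifiable curve in `X`, parametrized by arc length: a `1`-Lipschitz map
defined on the interval `[0, len]`. -/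
structure Curve (X : Type*) [MetricSpace X] where
  len : ℝ
  len_nonneg : 0 ≤ len
  toFun : ℝ → X
  lip : LipschitzOnWith 1 toFun (Set.Icc 0 len)

/-- The line integral `∫_γ g ds` of a nonnegative Borel function along a curve. -/
def lineIntegralAlongCurve (g : X → ℝ≥0∞) (γ : Curve X) : ℝ≥0∞ :=
  ∫⁻ t in Set.Icc (0 : ℝ) γ.len, g (γ.toFun t)

/-- The `p`-modulus of a family of curves. -/
def pModulus (p : ℝ) (μ : Measure X) (Γ : Set (Curve X)) : ℝ≥0∞ :=
  ⨅ ρ ∈ {ρ : X → ℝ≥0∞ | Measurable ρ ∧ ∀ γ ∈ Γ, 1 ≤ lineIntegralAlongCurve ρ γ},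
    ∫⁻ x, ρ x ^ p ∂μ

/-- `g` controls the variation of `u` along the curve `γ`. -/
def UpperGradientAlong (u : X → ℝ) (g : X → ℝ≥0∞) (γ : Curve X) : Prop :=
  ENNReal.ofReal |u (γ.toFun γ.len) - u (γ.toFun 0)| ≤ lineIntegralAlongCurve g γ

/-- The curve `γ` lies in the set `G`. -/
def CurveIn (G : Set X) (γ : Curve X) : Prop :=
  ∀ t ∈ Set.Icc (0 : ℝ) γ.len, γ.toFun t ∈ G

/-- `g` is a `p`-weak upper gradient of `u` relative to the set `G`: the upper gradient
inequality holds along `p`-almost every curve in `G`. -/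
def IsPWeakUpperGradientOn (p : ℝ) (μ : Measure X) (u : X → ℝ) (g : X → ℝ≥0∞)
    (G : Set X) : Prop :=
  Measurable g ∧ pModulus p μ {γ : Curve X | CurveIn G γ ∧ ¬ UpperGradientAlong u g γ} = 0

/-- `g` is a `p`-weak upper gradient of `u` on `X`. -/
def IsPWeakUpperGradient (p : ℝ) (μ : Measure X) (u : X → ℝ) (g : X → ℝ≥0∞) : Prop :=
  IsPWeakUpperGradientOn p μ u g Set.univ

/-- `g` is the minimal `p`-weak upper gradient of `u` (denoted `|∇u|`). -/
def IsMinimalPWeakUpperGradient (p : ℝ) (μ : Measure X)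
    (u : X → ℝ) (g : X → ℝ≥0∞) : Prop :=
  IsPWeakUpperGradient p μ u g ∧
    ∀ g₁ : X → ℝ≥0∞, IsPWeakUpperGradient p μ u g₁ → ∀ᵐ x ∂μ, g x ≤ g₁ x

/-- The `p`-Dirichlet energy `∫_Ω |∇u|^p dμ` of `u` on `Ω`, computed relative to curves in `G`,
expressed as the infimum over all `p`-weak upper gradients of `u` relative to `G`. -/
def pEnergyOn (p : ℝ) (μ : Measure X) (u : X → ℝ) (G Ω : Set X) : ℝ≥0∞ :=
  ⨅ g ∈ {g : X → ℝ≥0∞ | IsPWeakUpperGradientOn p μ u g G}, ∫⁻ x in Ω, g x ^ p ∂μ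

/-- The `p`-Dirichlet energy `∫_X |∇u|^p dμ`. -/
def pEnergy (p : ℝ) (μ : Measure X) (u : X → ℝ) : ℝ≥0∞ :=
  pEnergyOn p μ u Set.univ Set.univ

/-- The `p`-Royden algebra `BD^p(X)`: bounded continuous functions whose minimal `p`-weak
upper gradient lies in `L^p(X)`. -/
def BDp (p : ℝ) (μ : Measure X) : Set (X → ℝ) :=
  {u | Continuous u ∧ (∃ M : ℝ, ∀ x, |u x| ≤ M) ∧ pEnergy p μ u < ⊤}

/-- Convergence in the `BD^p`-topology: uniform boundedness, uniform convergence on compact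
sets, and convergence to zero of the `p`-Dirichlet energy of the differences. -/
def BDpTendsto (p : ℝ) (μ : Measure X) (u : ℕ → X → ℝ) (v : X → ℝ) : Prop :=
  (∃ M : ℝ, ∀ n x, |u n x| ≤ M) ∧
  (∀ K : Set X, IsCompact K → TendstoUniformlyOn u v atTop K) ∧
  Tendsto (fun n => pEnergy p μ (u n - v)) atTop (𝓝 0)

/-- `BD^p_c(X)`: compactly supported members of the `p`-Royden algebra. -/
def BDpc (p : ℝ) (μ : Measure X) : Set (X → ℝ) :=
  {u | u ∈ BDp p μ ∧ HasCompactSupport u}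

/-- The closure of `BD^p_c(X)` in `BD^p(X)` with respect to the `BD^p`-topology. -/
def BDpcl (p : ℝ) (μ : Measure X) : Set (X → ℝ) :=
  {u | u ∈ BDp p μ ∧ ∃ un : ℕ → X → ℝ, (∀ n, un n ∈ BDpc p μ) ∧ BDpTendsto p μ un u}

/-- The Newtonian space `N^{1,p}(X)`. -/
def N1p (p : ℝ) (μ : Measure X) : Set (X → ℝ) :=
  {u | Measurable u ∧ (∫⁻ x, ENNReal.ofReal |u x| ^ p ∂μ) < ⊤ ∧
    ∃ g : X → ℝ≥0∞, IsPWeakUpperGradient p μ u g ∧ (∫⁻ x, g x ^ p ∂μ) < ⊤}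

/-- The seminorm on `N^{1,p}(X)`. -/
def N1pNorm (p : ℝ) (μ : Measure X) (u : X → ℝ) : ℝ≥0∞ :=
  ((∫⁻ x, ENNReal.ofReal |u x| ^ p ∂μ) + pEnergy p μ u) ^ (1 / p)

/-- The Sobolev `p`-capacity of a set `E ⊆ X`. -/
def sobolevCapacity (p : ℝ) (μ : Measure X) (E : Set X) : ℝ≥0∞ :=
  ⨅ u ∈ {u : X → ℝ | u ∈ N1p p μ ∧ ∀ x ∈ E, 1 ≤ u x}, N1pNorm p μ u

/-- Membership in `N^{1,p}_loc(G)`. -/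
def MemN1pLocOn (p : ℝ) (μ : Measure X) (f : X → ℝ) (G : Set X) : Prop :=
  Measurable f ∧ ∀ Ω : Set X, IsCompact (closure Ω) → closure Ω ⊆ G →
    (∫⁻ x in Ω, ENNReal.ofReal |f x| ^ p ∂μ) < ⊤ ∧ pEnergyOn p μ f G Ω < ⊤

/-- `h` is `p`-harmonic in the open set `G`: a continuous `p`-minimizer, i.e.
`∫_Ω |∇h|^p dμ ≤ ∫_Ω |∇v|^p dμ` for every relatively compact open `Ω ⋐ G` and every
`v ∈ N^{1,p}_loc(G)` with `h - v ∈ C_0(Ω)` (that is, `h = v` quasieverywhere off `Ω`). -/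
def IsPHarmonicOn (p : ℝ) (μ : Measure X) (h : X → ℝ) (G : Set X) : Prop :=
  ContinuousOn h G ∧ MemN1pLocOn p μ h G ∧
    ∀ Ω : Set X, IsOpen Ω → IsCompact (closure Ω) → closure Ω ⊆ G →
      ∀ v : X → ℝ, MemN1pLocOn p μ v G →
        sobolevCapacity p μ {x | x ∉ Ω ∧ h x ≠ v x} = 0 →
          pEnergyOn p μ h G Ω ≤ pEnergyOn p μ v G Ω

/-- `HBD^p(X)`: the `p`-harmonic members of the `p`-Royden algebra. -/
def HBDp (p : ℝ) (μ : Measure X) : Set (X → ℝ) :=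
  {h | h ∈ BDp p μ ∧ IsPHarmonicOn p μ h Set.univ}

/-- The `(1,p)`-Poincaré inequality for `(X, d, μ)`. -/
def PoincareIneq (p : ℝ) (μ : Measure X) : Prop :=
  ∃ C σ : ℝ, 0 < C ∧ 1 ≤ σ ∧ ∀ (x : X) (r : ℝ), 0 < r → ∀ u : X → ℝ, ∀ g : X → ℝ≥0∞,
    IsPWeakUpperGradient p μ u g →
      (μ (ball x r))⁻¹ * (∫⁻ y in ball x r,
          ENNReal.ofReal |u y - ⨍ z in ball x r, u z ∂μ| ∂μ) ≤
        ENNReal.ofReal (r * C) *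
          ((μ (ball x (σ * r)))⁻¹ * ∫⁻ y in ball x (σ * r), g y ^ p ∂μ) ^ (1 / p)

/-- The `(p,p)`-Sobolev inequality: `‖f‖_p ≤ C ‖|∇f|‖_p` for all compactly supported
`f ∈ N^{1,p}(X)`. -/
def SobolevIneq (p : ℝ) (μ : Measure X) : Prop :=
  ∃ C : ℝ≥0, ∀ f : X → ℝ, f ∈ N1p p μ → HasCompactSupport f →
    (∫⁻ x, ENNReal.ofReal |f x| ^ p ∂μ) ^ (1 / p) ≤ (C : ℝ≥0∞) * (pEnergy p μ f) ^ (1 / p)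


/-! ### Auxiliary lemmas: Lipschitz bump functions belong to the Royden algebra -/

/-- The Lipschitz bump function `y ↦ max 0 (1 - d(y,x₀)/r)`. -/
def bump (x₀ : X) (r : ℝ) (y : X) : ℝ := max 0 (1 - dist y x₀ / r)

lemma bump_nonneg (x₀ : X) (r : ℝ) (y : X) : 0 ≤ bump x₀ r y := le_max_left _ _

lemma bump_le_one (x₀ : X) {r : ℝ} (hr : 0 < r) (y : X) : bump x₀ r y ≤ 1 := by
  have h1 : 0 ≤ dist y x₀ / r := div_nonneg dist_nonneg hr.le
  exact max_le zero_le_one (by linarith)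

lemma bump_self (x₀ : X) {r : ℝ} (hr : 0 < r) : bump x₀ r x₀ = 1 := by
  simp [bump]

lemma bump_eq_zero (x₀ : X) {r : ℝ} (hr : 0 < r) {y : X} (hy : r ≤ dist y x₀) :
    bump x₀ r y = 0 := by
  have h1 : (1 : ℝ) ≤ dist y x₀ / r := (one_le_div hr).2 hy
  exact max_eq_left (by linarith)

lemma mem_ball_of_bump_pos (x₀ : X) {r : ℝ} (hr : 0 < r) {y : X}
    (hy : 0 < bump x₀ r y) : y ∈ ball x₀ r := by
  by_contra h
  rw [mem_ball] at h
  push_neg at h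
  rw [bump_eq_zero x₀ hr h] at hy
  exact lt_irrefl _ hy

lemma bump_continuous (x₀ : X) (r : ℝ) : Continuous (bump x₀ r) :=
  continuous_const.max
    (continuous_const.sub ((continuous_id.dist continuous_const).div_const r))

lemma bump_lip (x₀ : X) {r : ℝ} (hr : 0 < r) (a b : X) :
    |bump x₀ r a - bump x₀ r b| ≤ dist a b / r := by
  have h1 : |bump x₀ r a - bump x₀ r b|
      ≤ |(1 - dist a x₀ / r) - (1 - dist b x₀ / r)| := by
    rw [bump, bump, max_comm 0 (1 - dist a x₀ / r), max_comm 0 (1 - dist b x₀ / r)]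
    exact abs_max_sub_max_le_abs _ _ _
  have h2 : (1 - dist a x₀ / r) - (1 - dist b x₀ / r) = (dist b x₀ - dist a x₀) / r := by
    ring
  rw [h2, abs_div, abs_of_pos hr] at h1
  refine h1.trans ?_
  gcongr
  rw [dist_comm a b]
  exact abs_dist_sub_le b a x₀

lemma curveIntegral_indicator_lower (x₀ : X) (r : ℝ) (γ : Curve X) (c : ℝ≥0∞)
    {a b : ℝ} (h0 : 0 ≤ a) (hab : a ≤ b) (hbL : b ≤ γ.len)
    (hmem : ∀ t ∈ Set.Ioo a b, γ.toFun t ∈ ball x₀ r) :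
    c * ENNReal.ofReal (b - a)
      ≤ lineIntegralAlongCurve ((ball x₀ r).indicator fun _ => c) γ := by
  have h1 : (∫⁻ t in Set.Ioo a b, (ball x₀ r).indicator (fun _ => c) (γ.toFun t))
      ≤ lineIntegralAlongCurve ((ball x₀ r).indicator fun _ => c) γ :=
    lintegral_mono_set fun t ht => ⟨h0.trans ht.1.le, ht.2.le.trans hbL⟩
  refine le_trans ?_ h1
  have h2 : ∀ᵐ t ∂(volume.restrict (Set.Ioo a b)),
      c ≤ (ball x₀ r).indicator (fun _ => c) (γ.toFun t) := by
    rw [ae_restrict_iff' measurableSet_Ioo]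
    exact ae_of_all _ fun t ht => by rw [Set.indicator_of_mem (hmem t ht)]
  calc c * ENNReal.ofReal (b - a) = ∫⁻ _ in Set.Ioo a b, c := by
        rw [setLIntegral_const, Real.volume_Ioo]
    _ ≤ _ := lintegral_mono_ae h2

lemma bump_upperGradient (x₀ : X) {r : ℝ} (hr : 0 < r) (γ : Curve X) :
    UpperGradientAlong (bump x₀ r)
      ((ball x₀ r).indicator fun _ => ENNReal.ofReal (1 / r)) γ := by
  set L := γ.len with hLdef
  have hL0 : (0 : ℝ) ≤ L := γ.len_nonneg
  set φ : ℝ → ℝ := fun t => bump x₀ r (γ.toFun t) with hφ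
  have hmem0 : (0 : ℝ) ∈ Set.Icc (0 : ℝ) L := ⟨le_refl _, hL0⟩
  have hmemL : L ∈ Set.Icc (0 : ℝ) L := ⟨hL0, le_refl _⟩
  have hφlip : ∀ s ∈ Set.Icc (0 : ℝ) L, ∀ t ∈ Set.Icc (0 : ℝ) L,
      |φ s - φ t| ≤ |s - t| / r := by
    intro s hs t ht
    refine (bump_lip x₀ hr _ _).trans ?_
    gcongr
    have h := γ.lip.dist_le_mul s hs t ht
    rwa [NNReal.coe_one, one_mul, Real.dist_eq] at h
  have hφcont : ContinuousOn φ (Set.Icc (0 : ℝ) L) :=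
    (bump_continuous x₀ r).comp_continuousOn γ.lip.continuousOn
  have hkey : ∀ {a b : ℝ}, 0 ≤ a → a ≤ b → b ≤ L →
      (∀ t ∈ Set.Ioo a b, γ.toFun t ∈ ball x₀ r) →
      ENNReal.ofReal ((b - a) / r)
        ≤ lineIntegralAlongCurve ((ball x₀ r).indicator fun _ => ENNReal.ofReal (1 / r)) γ := by
    intro a b h0 hab hbL hmem
    have := curveIntegral_indicator_lower x₀ r γ (ENNReal.ofReal (1 / r)) h0 hab hbL hmem
    refine le_trans (le_of_eq ?_) this
    rw [← ENNReal.ofReal_mul (by positivity : (0:ℝ) ≤ 1 / r)]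
    congr 1
    field_simp
  rw [UpperGradientAlong]
  rcases le_total (φ 0) (φ L) with hc | hc
  · -- `φ 0 ≤ φ L`: last time the curve is below level `φ 0`
    set S : Set ℝ := {t | t ∈ Set.Icc (0 : ℝ) L ∧ φ t ≤ φ 0} with hS
    have hSc : IsClosed S := by
      have : S = Set.Icc (0 : ℝ) L ∩ φ ⁻¹' Set.Iic (φ 0) := rfl
      rw [this]
      exact hφcont.preimage_isClosed_of_isClosed isClosed_Icc isClosed_Iic
    have hSne : S.Nonempty := ⟨0, hmem0, le_refl _⟩
    have hSbdd : BddAbove S := ⟨L, fun t ht => ht.1.2⟩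
    set T := sSup S with hT
    have hTS : T ∈ S := hSc.csSup_mem hSne hSbdd
    have h0T : 0 ≤ T := hTS.1.1
    have hTL : T ≤ L := hTS.1.2
    have hballm : ∀ t ∈ Set.Ioo T L, γ.toFun t ∈ ball x₀ r := by
      intro t ht
      have htI : t ∈ Set.Icc (0 : ℝ) L := ⟨h0T.trans ht.1.le, ht.2.le⟩
      have hnot : t ∉ S := fun hmem => absurd (le_csSup hSbdd hmem) (not_le.2 ht.1)
      have hφt : φ 0 < φ t := lt_of_not_ge fun h => hnot ⟨htI, h⟩
      exact mem_ball_of_bump_pos x₀ hr (lt_of_le_of_lt (bump_nonneg _ _ _) hφt)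
    have hest : |φ L - φ 0| ≤ (L - T) / r := by
      have h1 := hφlip L hmemL T hTS.1
      rw [abs_of_nonneg (sub_nonneg.2 hTL)] at h1
      rw [abs_of_nonneg (sub_nonneg.2 hc)]
      have h2 := le_abs_self (φ L - φ T)
      have h3 := hTS.2
      linarith
    exact le_trans (ENNReal.ofReal_le_ofReal hest) (hkey h0T hTL le_rfl hballm)
  · -- `φ L ≤ φ 0`: first time the curve is below level `φ L`
    set S : Set ℝ := {t | t ∈ Set.Icc (0 : ℝ) L ∧ φ t ≤ φ L} with hS
    have hSc : IsClosed S := by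
      have : S = Set.Icc (0 : ℝ) L ∩ φ ⁻¹' Set.Iic (φ L) := rfl
      rw [this]
      exact hφcont.preimage_isClosed_of_isClosed isClosed_Icc isClosed_Iic
    have hSne : S.Nonempty := ⟨L, hmemL, le_refl _⟩
    have hSbdd : BddBelow S := ⟨0, fun t ht => ht.1.1⟩
    set T := sInf S with hT
    have hTS : T ∈ S := hSc.csInf_mem hSne hSbdd
    have h0T : 0 ≤ T := hTS.1.1
    have hTL : T ≤ L := hTS.1.2
    have hballm : ∀ t ∈ Set.Ioo 0 T, γ.toFun t ∈ ball x₀ r := by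
      intro t ht
      have htI : t ∈ Set.Icc (0 : ℝ) L := ⟨ht.1.le, ht.2.le.trans hTL⟩
      have hnot : t ∉ S := fun hmem => absurd (csInf_le hSbdd hmem) (not_le.2 ht.2)
      have hφt : φ L < φ t := lt_of_not_ge fun h => hnot ⟨htI, h⟩
      exact mem_ball_of_bump_pos x₀ hr (lt_of_le_of_lt (bump_nonneg _ _ _) hφt)
    have hest : |φ L - φ 0| ≤ (T - 0) / r := by
      have h1 := hφlip 0 hmem0 T hTS.1
      rw [abs_of_nonpos (by linarith : (0:ℝ) - T ≤ 0)] at h1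
      rw [abs_of_nonpos (sub_nonpos.2 hc)]
      have h2 := le_abs_self (φ 0 - φ T)
      have h3 := hTS.2
      have h4 : -(0 - T) = T - 0 := by ring
      rw [h4] at h1
      linarith
    exact le_trans (ENNReal.ofReal_le_ofReal hest) (hkey le_rfl h0T hTL hballm)

lemma pModulus_of_empty {p : ℝ} (hp : 0 < p) (μ : Measure X) :
    pModulus p μ (∅ : Set (Curve X)) = 0 := by
  refine le_antisymm ?_ zero_le
  have h : (fun _ : X => (0 : ℝ≥0∞)) ∈ {ρ : X → ℝ≥0∞ | Measurable ρ ∧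
      ∀ γ ∈ (∅ : Set (Curve X)), 1 ≤ lineIntegralAlongCurve ρ γ} :=
    ⟨measurable_const, fun γ hγ => absurd hγ (Set.notMem_empty γ)⟩
  calc pModulus p μ ∅ ≤ ∫⁻ _x, (0 : ℝ≥0∞) ^ p ∂μ := iInf₂_le _ h
    _ = 0 := by simp [ENNReal.zero_rpow_of_pos hp]

lemma bump_mem_BDp (p : ℝ) (hp : 1 < p) (μ : Measure X)
    (hball : ∀ (x : X) (r : ℝ), 0 < r → 0 < μ (ball x r) ∧ μ (ball x r) < ⊤)
    (x₀ : X) {r : ℝ} (hr : 0 < r) : bump x₀ r ∈ BDp p μ := by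
  have hp0 : (0 : ℝ) < p := lt_trans one_pos hp
  refine ⟨bump_continuous x₀ r, ⟨1, fun x => ?_⟩, ?_⟩
  · rw [abs_of_nonneg (bump_nonneg _ _ _)]
    exact bump_le_one x₀ hr x
  · set g : X → ℝ≥0∞ := (ball x₀ r).indicator fun _ => ENNReal.ofReal (1 / r) with hg
    have hgmeas : Measurable g := measurable_const.indicator measurableSet_ball
    have hgug : IsPWeakUpperGradientOn p μ (bump x₀ r) g Set.univ := by
      refine ⟨hgmeas, ?_⟩
      have hempty : {γ : Curve X | CurveIn Set.univ γ ∧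
          ¬ UpperGradientAlong (bump x₀ r) g γ} = ∅ := by
        rw [Set.eq_empty_iff_forall_notMem]
        rintro γ ⟨-, hbad⟩
        exact hbad (bump_upperGradient x₀ hr γ)
      rw [hempty, pModulus_of_empty hp0]
    have hle : pEnergy p μ (bump x₀ r) ≤ ∫⁻ x in Set.univ, g x ^ p ∂μ := by
      simp only [pEnergy, pEnergyOn]
      exact iInf₂_le g hgug
    refine lt_of_le_of_lt hle ?_
    rw [Measure.restrict_univ]
    have heq : ∀ x, g x ^ p
        = (ball x₀ r).indicator (fun _ => ENNReal.ofReal (1 / r) ^ p) x := by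
      intro x
      by_cases hx : x ∈ ball x₀ r
      · simp [hg, Set.indicator_of_mem hx]
      · simp [hg, Set.indicator_of_notMem hx, ENNReal.zero_rpow_of_pos hp0]
    rw [lintegral_congr heq, lintegral_indicator measurableSet_ball, setLIntegral_const]
    exact ENNReal.mul_lt_top
      (ENNReal.rpow_lt_top_of_nonneg hp0.le ENNReal.ofReal_ne_top)
      (hball x₀ r hr).2


/-- The evaluation map `e : X → ∏_{u ∈ BD^p(X)} ℝ`, `e(x)(u) = u(x)`. -/
def roydenEval (p : ℝ) (μ : Measure X) (x : X) : ↥(BDp p μ) → ℝ :=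
  fun u => (u : X → ℝ) x

/-- The Royden compactification `X̄`: the closure of `e(X)` in the product space. -/
def roydenCpt (p : ℝ) (μ : Measure X) : Set (↥(BDp p μ) → ℝ) :=
  closure (Set.range (roydenEval p μ))

/-- The `p`-Royden boundary `R_p(X) = X̄ \ X`. -/
def roydenBoundary (p : ℝ) (μ : Measure X) : Set (↥(BDp p μ) → ℝ) :=
  roydenCpt p μ \ Set.range (roydenEval p μ)

/-- The `p`-harmonic boundary `Δ_p(X)`: points of `R_p(X)` at which (the continuous
extensions of) all members of `cl(BD^p_c(X))` vanish. -/
def pHarmonicBoundary (p : ℝ) (μ : Measure X) : Set (↥(BDp p μ) → ℝ) :=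
  {ξ | ξ ∈ roydenBoundary p μ ∧ ∀ u : ↥(BDp p μ), (u : X → ℝ) ∈ BDpcl p μ → ξ u = 0}

/-- The evaluation map `e : X → ∏_{u ∈ BD^p(X)} ℝ` is a topological embedding; the Royden
compactification `X̄ = closure e(X)` is a compact Hausdorff space in which `e(X)` is open
and dense, and every `u ∈ BD^p(X)` extends continuously to `X̄`. -/
theorem stmt7 {X : Type*} [MetricSpace X] [MeasurableSpace X] [BorelSpace X]
    [ProperSpace X] [Nontrivial X]
    (p : ℝ) (hp : 1 < p) (μ : MeasureTheory.Measure X) [μ.IsComplete]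
    (hnoncompact : ¬ IsCompact (Set.univ : Set X))
    (hdoubling : ∃ C : ℝ≥0, ∀ (x : X) (r : ℝ), 0 < r →
      μ (ball x (2 * r)) ≤ (C : ℝ≥0∞) * μ (ball x r))
    (hball : ∀ (x : X) (r : ℝ), 0 < r → 0 < μ (ball x r) ∧ μ (ball x r) < ⊤)
    :
    Topology.IsEmbedding (roydenEval p μ) ∧
      IsCompact (roydenCpt p μ) ∧
      T2Space ↥(roydenCpt p μ) ∧
      IsOpen ((↑) ⁻¹' Set.range (roydenEval p μ) : Set ↥(roydenCpt p μ)) ∧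
      Dense ((↑) ⁻¹' Set.range (roydenEval p μ) : Set ↥(roydenCpt p μ)) ∧
      ∀ u : ↥(BDp p μ), ∃ F : ↥(roydenCpt p μ) → ℝ, Continuous F ∧
        ∀ x : X, F ⟨roydenEval p μ x, subset_closure (Set.mem_range_self x)⟩
          = (u : X → ℝ) x := by
  have hp0 : (0 : ℝ) < p := lt_trans one_pos hp
  have hbump : ∀ (x₀ : X) {r : ℝ}, 0 < r → bump x₀ r ∈ BDp p μ :=
    fun x₀ r hr => bump_mem_BDp p hp μ hball x₀ hr
  have econt : Continuous (roydenEval p μ) := continuous_pi fun u => u.prop.1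
  -- the embedding property
  have hemb : Topology.IsEmbedding (roydenEval p μ) := by
    constructor
    · refine isInducing_iff_nhds.2 fun x => le_antisymm ((econt.tendsto x).le_comap) ?_
      intro s hs
      rcases Metric.mem_nhds_iff.1 hs with ⟨ε, hε, hεs⟩
      set u : ↥(BDp p μ) := ⟨bump x ε, hbump x hε⟩ with hu
      have hV : {f : ↥(BDp p μ) → ℝ | 1 / 2 < f u} ∈ 𝓝 (roydenEval p μ x) := by
        refine (isOpen_Ioi.preimage (continuous_apply u)).mem_nhds ?_
        show (1 : ℝ) / 2 < bump x ε x
        rw [bump_self x hε]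
        norm_num
      refine mem_of_superset (preimage_mem_comap hV) fun y hy => hεs ?_
      have hy' : (0 : ℝ) < bump x ε y := by
        have : (1 : ℝ) / 2 < bump x ε y := hy
        linarith
      exact mem_ball_of_bump_pos x hε hy'
    · intro x y hxy
      by_contra hne
      have hd : 0 < dist x y := dist_pos.2 hne
      have h1 := congrFun hxy ⟨bump x (dist x y), hbump x hd⟩
      have h2 : bump x (dist x y) x = bump x (dist x y) y := h1
      rw [bump_self x hd, bump_eq_zero x hd (by rw [dist_comm])] at h2
      exact one_ne_zero h2
  -- compactness
  have hcompact : IsCompact (roydenCpt p μ) := by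
    set M : ↥(BDp p μ) → ℝ := fun u => Classical.choose u.prop.2.1 with hM
    have hMspec : ∀ (u : ↥(BDp p μ)) (x : X), |(u : X → ℝ) x| ≤ M u :=
      fun u => Classical.choose_spec u.prop.2.1
    have hKc : IsCompact (Set.pi Set.univ fun u : ↥(BDp p μ) => Set.Icc (-(M u)) (M u)) :=
      isCompact_univ_pi fun u => isCompact_Icc
    refine hKc.of_isClosed_subset isClosed_closure (closure_minimal ?_ hKc.isClosed)
    rintro _ ⟨x, rfl⟩
    intro u _
    exact abs_le.1 (hMspec u x)
  -- openness of the image in the compactification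
  have hopen_key : ∀ x : X,
      roydenCpt p μ ∩ {f | 1 / 2 < f ⟨bump x 1, hbump x one_pos⟩}
        ⊆ Set.range (roydenEval p μ) := by
    intro x ξ hmem
    obtain ⟨hξ1, hξ2⟩ := hmem
    set u : ↥(BDp p μ) := ⟨bump x 1, hbump x one_pos⟩ with hu
    set V := {f : ↥(BDp p μ) → ℝ | 1 / 2 < f u} with hVdef
    have hVopen : IsOpen V := isOpen_Ioi.preimage (continuous_apply u)
    have hmemcl : ξ ∈ closure (Set.range (roydenEval p μ) ∩ V) := by
      have hξ1' : ξ ∈ closure (Set.range (roydenEval p μ)) := hξ1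
      rw [mem_closure_iff_nhds] at hξ1' ⊢
      intro t ht
      rcases hξ1' (t ∩ V) (inter_mem ht (hVopen.mem_nhds hξ2)) with ⟨f, ⟨hft, hfV⟩, hfr⟩
      exact ⟨f, hft, hfr, hfV⟩
    have hsub : Set.range (roydenEval p μ) ∩ V ⊆ roydenEval p μ '' closedBall x 1 := by
      rintro _ ⟨⟨y, rfl⟩, hyV⟩
      refine ⟨y, ball_subset_closedBall (mem_ball_of_bump_pos x one_pos ?_), rfl⟩
      have : (1 : ℝ) / 2 < bump x 1 y := hyV
      linarith
    have himg : IsCompact (roydenEval p μ '' closedBall x 1) :=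
      (isCompact_closedBall x 1).image econt
    exact Set.image_subset_range _ _ (closure_minimal hsub himg.isClosed hmemcl)
  have hopen : IsOpen ((↑) ⁻¹' Set.range (roydenEval p μ) : Set ↥(roydenCpt p μ)) := by
    have heq : ((↑) ⁻¹' Set.range (roydenEval p μ) : Set ↥(roydenCpt p μ)) =
        ⋃ x : X, (↑) ⁻¹' {f : ↥(BDp p μ) → ℝ | 1 / 2 < f ⟨bump x 1, hbump x one_pos⟩} := by
      ext ⟨ξ, hξ⟩
      simp only [Set.mem_preimage, Set.mem_iUnion]
      constructor
      · rintro ⟨x, rfl⟩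
        refine ⟨x, ?_⟩
        show (1 : ℝ) / 2 < bump x 1 x
        rw [bump_self x one_pos]
        norm_num
      · rintro ⟨x, hx⟩
        exact hopen_key x ⟨hξ, hx⟩
    rw [heq]
    exact isOpen_iUnion fun x =>
      ((isOpen_Ioi.preimage (continuous_apply _)).preimage continuous_subtype_val)
  -- density
  have hdense : Dense ((↑) ⁻¹' Set.range (roydenEval p μ) : Set ↥(roydenCpt p μ)) := by
    intro ξ
    rw [closure_subtype]
    refine closure_mono (fun a ha => ?_) ξ.prop
    exact ⟨⟨a, subset_closure ha⟩, ha, rfl⟩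
  exact ⟨hemb, hcompact, inferInstance, hopen, hdense, fun u =>
    ⟨fun ξ => (ξ : ↥(BDp p μ) → ℝ) u,
      (continuous_apply u).comp continuous_subtype_val, fun x => rfl⟩⟩

end
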